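/- Let f : ℝⁿ → ℝ be convex differentiable, Ψ : ℝⁿ → ℝ ∪ {∞} proper lower semicontinuous convex, L > 0, y ∈ ℝⁿ, and let x⁺ = argmin_x [f(y) + ⟨∇f(y), x − y⟩ + (L/2)‖x − y‖² + Ψ(x)]. Suppose the descent condition f(x⁺) ≤ f(y) + ⟨∇f(y), x⁺ − y⟩ + (L/2)‖x⁺ − y‖² holds. Define the composite gradient g_L(y) = L(y − x⁺) and F = f + Ψ. Then F(x⁺) ≤ F(y) − (1/(2L))‖g_L(y)‖². -/

import Mathlib

open RealInnerProductSpace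

theorem composite_gradient_descent_rule {n : ℕ}
    (f Ψ : EuclideanSpace ℝ (Fin n) → ℝ)
    (hf : Differentiable ℝ f) (hfconv : ConvexOn ℝ Set.univ f)
    (hΨconv : ConvexOn ℝ Set.univ Ψ) (hΨlsc : LowerSemicontinuous Ψ)
    (L : ℝ) (hL : 0 < L) (y xp : EuclideanSpace ℝ (Fin n))
    (hmin : ∀ x, f y + ⟪gradient f y, xp - y⟫ + L / 2 * ‖xp - y‖ ^ 2 + Ψ xp ≤
                 f y + ⟪gradient f y, x - y⟫ + L / 2 * ‖x - y‖ ^ 2 + Ψ x)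
    (hdesc : f xp ≤ f y + ⟪gradient f y, xp - y⟫ + L / 2 * ‖xp - y‖ ^ 2) :
    f xp + Ψ xp ≤ (f y + Ψ y) - 1 / (2 * L) * ‖L • (y - xp)‖ ^ 2 := by
  set g := gradient f y with hg
  set A := ⟪g, xp - y⟫ with hA
  set D := ‖xp - y‖ ^ 2 with hD
  have hDnn : 0 ≤ D := sq_nonneg _
  have key : A + L * D + Ψ xp ≤ Ψ y := by
    refine le_of_forall_pos_le_add ?_
    intro ε hε
    rcases eq_or_lt_of_le hDnn with hD0 | hD0
    · -- D = 0 : xp = y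
      have hxy : xp = y := by
        have h1 : ‖xp - y‖ = 0 := by nlinarith [norm_nonneg (xp - y)]
        exact sub_eq_zero.mp (norm_eq_zero.mp h1)
      have hA0 : A = 0 := by rw [hA, hxy, sub_self, inner_zero_right]
      rw [hxy, hA0, ← hD0]
      linarith
    · set t : ℝ := min 1 (2 * ε / (L * D)) with ht
      have hLD : 0 < L * D := mul_pos hL hD0
      have ht0 : 0 < t := lt_min one_pos (by positivity)
      have ht1 : t ≤ 1 := min_le_left _ _
      have htD : t * (L * D) ≤ 2 * ε := by
        have h2 : t ≤ 2 * ε / (L * D) := min_le_right _ _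
        calc t * (L * D) ≤ (2 * ε / (L * D)) * (L * D) :=
              mul_le_mul_of_nonneg_right h2 hLD.le
          _ = 2 * ε := by field_simp
      have hx := hmin ((1 - t) • xp + t • y)
      have hsub : ((1 - t) • xp + t • y) - y = (1 - t) • (xp - y) := by
        rw [smul_sub]
        module
      have hinner : ⟪g, ((1 - t) • xp + t • y) - y⟫ = (1 - t) * A := by
        rw [hsub, real_inner_smul_right, hA]
      have hnorm : ‖((1 - t) • xp + t • y) - y‖ ^ 2 = (1 - t) ^ 2 * D := by
        rw [hsub, norm_smul, Real.norm_eq_abs, mul_pow, sq_abs, hD]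
      have hconv := hΨconv.2 (Set.mem_univ xp) (Set.mem_univ y)
        (by linarith : (0:ℝ) ≤ 1 - t) ht0.le (by ring)
      rw [hinner, hnorm] at hx
      simp only [smul_eq_mul] at hconv
      -- hx : f y + A + L/2 * D + Ψ xp ≤ f y + (1-t)*A + L/2*(1-t)^2*D + Ψ((1-t)•xp+t•y)
      -- hconv : Ψ((1-t)•xp+t•y) ≤ (1-t)*Ψ xp + t*Ψ y
      -- combine: t*A + L/2*(2t - t^2)*D + t*Ψ xp ≤ t*Ψ y
      -- divide by t: A + L/2*(2-t)*D + Ψ xp ≤ Ψ y, so A + L*D + Ψ xp ≤ Ψ y + L*t*D/2 ≤ Ψ y + ε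
      have hcomb : t * A + L / 2 * (2 * t - t ^ 2) * D + t * Ψ xp ≤ t * Ψ y := by
        nlinarith [hx, hconv]
      have hfin : t * (A + L * D + Ψ xp) ≤ t * (Ψ y + ε) := by
        nlinarith [hcomb, mul_le_mul_of_nonneg_left htD ht0.le]
      exact le_of_mul_le_mul_left hfin ht0
  have hnorm2 : ‖L • (y - xp)‖ ^ 2 = L ^ 2 * D := by
    rw [norm_smul, Real.norm_eq_abs, mul_pow, sq_abs, hD, norm_sub_rev]
  rw [hnorm2]
  have h1 : 1 / (2 * L) * (L ^ 2 * D) = L / 2 * D := by field_simp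
  rw [h1]
  nlinarith [hdesc, key]
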